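/- Let p(x₁,…,xₘ) = ∑_{σ∈Sₘ} c_σ x_{σ(1)}⋯x_{σ(m)} (c_σ ∈ ℝ) be a multilinear polynomial on the real quaternion algebra ℍ. If every value of p is a vector quaternion (has zero real part) and p is not identically zero on ℍ, then Im p equals the whole set V of vector quaternions. -/

import Mathlib

open Quaternion

/-- Evaluation of the multilinear polynomial
`p(x₁,…,xₘ) = ∑_{σ ∈ Sₘ} c_σ x_{σ(1)} ⋯ x_{σ(m)}` on the real quaternions. -/
noncomputable def mlinEval {m : ℕ} (c : Equiv.Perm (Fin m) → ℝ)
    (x : Fin m → ℍ[ℝ]) : ℍ[ℝ] :=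
  ∑ σ : Equiv.Perm (Fin m), c σ • (List.ofFn fun i => x (σ i)).prod

private lemma map_smul_prod (t : ℝ) : ∀ l : List ℍ[ℝ],
    (l.map (fun a => t • a)).prod = t ^ l.length • l.prod
  | [] => by simp
  | a :: l => by
      simp only [List.map_cons, List.prod_cons, map_smul_prod t l, List.length_cons]
      rw [smul_mul_assoc, mul_smul_comm, smul_smul, pow_succ']

private lemma map_conj_prod (u : ℍ[ℝ]) (hu : u ≠ 0) : ∀ l : List ℍ[ℝ],
    (l.map (fun a => u * a * u⁻¹)).prod = u * l.prod * u⁻¹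
  | [] => by simp [mul_inv_cancel₀ hu]
  | a :: l => by
      simp only [List.map_cons, List.prod_cons, map_conj_prod u hu l]
      have h1 : u⁻¹ * (u * l.prod * u⁻¹) = l.prod * u⁻¹ := by
        rw [← mul_assoc, ← mul_assoc, inv_mul_cancel₀ hu, one_mul]
      rw [mul_assoc (u * a) u⁻¹, h1, ← mul_assoc, mul_assoc u a]

private lemma mlinEval_smul {m : ℕ} (c : Equiv.Perm (Fin m) → ℝ) (t : ℝ)
    (x : Fin m → ℍ[ℝ]) :
    mlinEval c (fun i => t • x i) = t ^ m • mlinEval c x := by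
  unfold mlinEval
  rw [Finset.smul_sum]
  refine Finset.sum_congr rfl fun σ _ => ?_
  have h : (List.ofFn fun i => t • x (σ i))
      = (List.ofFn fun i => x (σ i)).map (fun a => t • a) := by
    rw [List.map_ofFn]; rfl
  rw [h, map_smul_prod, List.length_ofFn, smul_smul, smul_smul, mul_comm]

private lemma mlinEval_conj {m : ℕ} (c : Equiv.Perm (Fin m) → ℝ) (u : ℍ[ℝ])
    (hu : u ≠ 0) (x : Fin m → ℍ[ℝ]) :
    mlinEval c (fun i => u * x i * u⁻¹) = u * mlinEval c x * u⁻¹ := by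
  unfold mlinEval
  rw [Finset.mul_sum, Finset.sum_mul]
  refine Finset.sum_congr rfl fun σ _ => ?_
  have h : (List.ofFn fun i => u * x (σ i) * u⁻¹)
      = (List.ofFn fun i => x (σ i)).map (fun a => u * a * u⁻¹) := by
    rw [List.map_ofFn]; rfl
  rw [h, map_conj_prod u hu, mul_smul_comm, smul_mul_assoc]

/-- For a nonzero pure quaternion there is a nonzero quaternion anticommuting with it. -/
private lemma exists_anticomm (a : ℍ[ℝ]) (ha : a.re = 0) (ha0 : a ≠ 0) :
    ∃ v : ℍ[ℝ], v ≠ 0 ∧ v * a = -(a * v) := by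
  by_cases hxy : a.imI = 0 ∧ a.imJ = 0
  · refine ⟨⟨0, 1, 0, 0⟩, ?_, ?_⟩
    · intro h
      have := congrArg QuaternionAlgebra.imI h
      simp at this
    · set v : ℍ[ℝ] := ⟨0, 1, 0, 0⟩ with hv
      ext <;> simp only [Quaternion.re_mul, Quaternion.imI_mul, Quaternion.imJ_mul,
        Quaternion.imK_mul, Quaternion.re_neg, Quaternion.imI_neg, Quaternion.imJ_neg,
        Quaternion.imK_neg] <;> simp [hv, ha, hxy.1, hxy.2] <;> ring
  · refine ⟨⟨0, -a.imJ, a.imI, 0⟩, ?_, ?_⟩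
    · intro h
      refine hxy ⟨?_, ?_⟩
      · have := congrArg QuaternionAlgebra.imJ h; simpa using this
      · have := congrArg QuaternionAlgebra.imI h; simpa using this
    · set v : ℍ[ℝ] := ⟨0, -a.imJ, a.imI, 0⟩ with hv
      ext <;> simp only [Quaternion.re_mul, Quaternion.imI_mul, Quaternion.imJ_mul,
        Quaternion.imK_mul, Quaternion.re_neg, Quaternion.imI_neg, Quaternion.imJ_neg,
        Quaternion.imK_neg] <;> simp [hv, ha] <;> ring

/-- Conjugation acts transitively on pure quaternions of equal `normSq`. -/
private lemma conj_trans (a b : ℍ[ℝ]) (ha : a.re = 0) (hb : b.re = 0)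
    (hab : normSq a = normSq b) (ha0 : a ≠ 0) :
    ∃ u : ℍ[ℝ], u ≠ 0 ∧ u * a * u⁻¹ = b := by
  have sq_pure : ∀ x : ℍ[ℝ], x.re = 0 → x * x = -((normSq x : ℝ) : ℍ[ℝ]) := by
    intro x hx
    have hs : star x = -x := Quaternion.star_eq_neg.mpr hx
    have h2 : -(x * x) = ((normSq x : ℝ) : ℍ[ℝ]) := by
      rw [← mul_neg, ← hs, Quaternion.self_mul_star]
    rw [neg_eq_iff_eq_neg] at h2
    exact h2
  by_cases h : a + b = 0
  · obtain ⟨v, hv0, hva⟩ := exists_anticomm a ha ha0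
    refine ⟨v, hv0, ?_⟩
    have hb' : b = -a := (neg_eq_of_add_eq_zero_right h).symm
    rw [hb', hva, neg_mul, mul_assoc, mul_inv_cancel₀ hv0, mul_one]
  · refine ⟨a + b, h, ?_⟩
    have key : (a + b) * a = b * (a + b) := by
      rw [add_mul, mul_add, sq_pure a ha, sq_pure b hb, hab]
      abel
    rw [key, mul_assoc, mul_inv_cancel₀ h, mul_one]

/-- If all values of a multilinear polynomial on ℍ are vector quaternions and
the polynomial is not identically zero, its image is the whole set `V` of
vector quaternions. -/
theorem image_multilinear_eq_vectors {m : ℕ} (c : Equiv.Perm (Fin m) → ℝ)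
    (hvec : ∀ x : Fin m → ℍ[ℝ], (mlinEval c x).re = 0)
    (hne : ∃ x : Fin m → ℍ[ℝ], mlinEval c x ≠ 0) :
    Set.range (mlinEval c) = {q : ℍ[ℝ] | q.re = 0} := by
  obtain ⟨x₀, hx₀⟩ := hne
  cases m with
  | zero =>
      exfalso
      apply hx₀
      have h1 : mlinEval c x₀ = ((∑ σ : Equiv.Perm (Fin 0), c σ : ℝ)) • (1 : ℍ[ℝ]) := by
        unfold mlinEval
        rw [Finset.sum_smul]
        refine Finset.sum_congr rfl fun σ _ => by simp
      have h2 := hvec x₀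
      rw [h1] at h2 ⊢
      simp only [Quaternion.re_smul, Quaternion.re_one, smul_eq_mul, mul_one] at h2
      rw [h2, zero_smul]
  | succ n =>
      ext q
      simp only [Set.mem_range, Set.mem_setOf_eq]
      constructor
      · rintro ⟨x, rfl⟩; exact hvec x
      · intro hq
        by_cases hq0 : q = 0
        · refine ⟨0, ?_⟩
          unfold mlinEval
          simp [List.ofFn_succ, hq0]
        · set q₀ := mlinEval c x₀ with hq₀def
          have hq₀re : q₀.re = 0 := hvec x₀
          have hq₀ns : normSq q₀ ≠ 0 := normSq_ne_zero.mpr hx₀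
          have hqns : normSq q ≠ 0 := normSq_ne_zero.mpr hq0
          have hq₀pos : 0 < normSq q₀ := lt_of_le_of_ne normSq_nonneg (Ne.symm hq₀ns)
          have hqpos : 0 < normSq q := lt_of_le_of_ne normSq_nonneg (Ne.symm hqns)
          set r : ℝ := Real.sqrt (normSq q₀ / normSq q) with hrdef
          have hrpos : 0 < r := Real.sqrt_pos.mpr (div_pos hq₀pos hqpos)
          set b : ℍ[ℝ] := r • q with hbdef
          have hbre : b.re = 0 := by simp [hbdef, Quaternion.re_smul, hq]
          have hbns : normSq q₀ = normSq b := by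
            rw [hbdef, normSq_smul, hrdef, Real.sq_sqrt (le_of_lt (div_pos hq₀pos hqpos))]
            field_simp
          obtain ⟨u, hu0, hu⟩ := conj_trans q₀ b hq₀re hbre hbns hx₀
          set s : ℝ := (r⁻¹) ^ (((n : ℝ) + 1)⁻¹) with hsdef
          have hs : s ^ (n + 1) = r⁻¹ := by
            rw [hsdef, ← Real.rpow_natCast ((r⁻¹) ^ (((n : ℝ) + 1)⁻¹)) (n + 1),
              ← Real.rpow_mul (le_of_lt (inv_pos.mpr hrpos))]
            push_cast
            rw [inv_mul_cancel₀ (by positivity : (n : ℝ) + 1 ≠ 0), Real.rpow_one]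
          refine ⟨fun i => s • (u * x₀ i * u⁻¹), ?_⟩
          rw [mlinEval_smul c s (fun i => u * x₀ i * u⁻¹), mlinEval_conj c u hu0 x₀,
            ← hq₀def, hu, hs, hbdef, smul_smul, inv_mul_cancel₀ (ne_of_gt hrpos), one_smul]
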